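/- For any finite set Y ⊆ 𝒳, any m ∈ ℤ⁺, and any weighted weak tournament 𝒯 ∈ 𝕎𝕋^w_{Y,m}, the margin graph of the profile representation of 𝒯 relative to Y and m equals 𝒯: ℳ(𝔓_{Y,m}(𝒯)) = 𝒯. -/

import Mathlib

/- Formalization of the profile representation of (weighted) weak tournaments from
Holliday, Norman, Pacuit, Zahedian, "Impossibility theorems involving weakenings of
expansion consistency and resoluteness in voting". Candidates form an infinite
type `C`. -/

open Classical

noncomputable section

/-- `L` is a strict linear order on exactly the finite set `s`. -/
def IsStrictLinearOrderOn {C : Type} (s : Finset C) (L : C → C → Prop) : Prop :=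
  (∀ x, ¬ L x x) ∧ (∀ x y z, L x y → L y z → L x z) ∧
    (∀ x ∈ s, ∀ y ∈ s, x ≠ y → L x y ∨ L y x) ∧ ∀ x y, L x y → x ∈ s ∧ y ∈ s

/-- Restriction of a relation to a finite set `A`. -/
def restrictRel {C : Type} (A : Finset C) (L : C → C → Prop) : C → C → Prop :=
  fun x y => L x y ∧ x ∈ A ∧ y ∈ A

theorem IsStrictLinearOrderOn.restrict {C : Type} {s A : Finset C} {L : C → C → Prop}
    (h : IsStrictLinearOrderOn s L) (hA : A ⊆ s) :
    IsStrictLinearOrderOn A (restrictRel A L) := by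
  obtain ⟨hirr, htr, htot, hdom⟩ := h
  refine ⟨fun x hx => hirr x hx.1,
    fun x y z hxy hyz => ⟨htr _ _ _ hxy.1 hyz.1, hxy.2.1, hyz.2.2⟩, ?_,
    fun x y hxy => ⟨hxy.2.1, hxy.2.2⟩⟩
  intro x hx y hy hne
  rcases htot x (hA hx) y (hA hy) hne with h' | h'
  · exact Or.inl ⟨h', hx, hy⟩
  · exact Or.inr ⟨h', hy, hx⟩

/-- The image of a relation under the transposition of `a` and `b`:
`(x, y) ∈ swapRel a b L` iff `(π x, π y) ∈ L` where `π` swaps `a` and `b`. -/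
def swapRel {C : Type} (a b : C) (L : C → C → Prop) : C → C → Prop :=
  fun x y => L (Equiv.swap a b x) (Equiv.swap a b y)

theorem IsStrictLinearOrderOn.swapRel_mem {C : Type} {s : Finset C} {L : C → C → Prop}
    (a b : C) (h : IsStrictLinearOrderOn s L) :
    IsStrictLinearOrderOn (s.image (Equiv.swap a b)) (swapRel a b L) := by
  obtain ⟨hirr, htr, htot, hdom⟩ := h
  refine ⟨fun x => hirr _, fun x y z hxy hyz => htr _ _ _ hxy hyz, ?_, ?_⟩
  · intro x hx y hy hne
    obtain ⟨x', hx', rfl⟩ := Finset.mem_image.mp hx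
    obtain ⟨y', hy', rfl⟩ := Finset.mem_image.mp hy
    have hne' : x' ≠ y' := by rintro rfl; exact hne rfl
    have := htot x' hx' y' hy' hne'
    simpa [swapRel, Equiv.swap_apply_self] using this
  · intro x y hxy
    obtain ⟨h1, h2⟩ := hdom _ _ hxy
    exact ⟨Finset.mem_image.mpr ⟨_, h1, Equiv.swap_apply_self a b x⟩,
      Finset.mem_image.mpr ⟨_, h2, Equiv.swap_apply_self a b y⟩⟩

theorem IsStrictLinearOrderOn.of_swapRel {C : Type} {s : Finset C} {L : C → C → Prop}
    {a b : C} (h : IsStrictLinearOrderOn s (swapRel a b L)) :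
    IsStrictLinearOrderOn (s.image (Equiv.swap a b)) L := by
  have h2 := h.swapRel_mem a b
  have heq : swapRel a b (swapRel a b L) = L := by
    funext x y
    simp [swapRel, Equiv.swap_apply_self]
  rwa [heq] at h2

/-- A generalized anonymous profile: an integer-valued function on the strict linear
orders of a finite nonempty set of candidates (encoded as a function on all
relations, supported on the strict linear orders of `cands`). -/
structure GAProfile (C : Type) where
  cands : Finset C
  cands_nonempty : cands.Nonempty
  count : (C → C → Prop) → ℤ
  count_supp : ∀ L, count L ≠ 0 → IsStrictLinearOrderOn cands L

namespace GAProfile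

variable {C : Type}

/-- `P` is an anonymous profile: all ballot counts are nonnegative. -/
def IsAnon (P : GAProfile C) : Prop := ∀ L, 0 ≤ P.count L

/-- The margin `μ_{x,y}(P)` of `x` over `y` in `P`. -/
def margin (P : GAProfile C) (x y : C) : ℤ :=
  (∑ᶠ L : C → C → Prop, if L x y then P.count L else 0) -
    ∑ᶠ L : C → C → Prop, if L y x then P.count L else 0

theorem margin_neg (P : GAProfile C) (x y : C) : P.margin y x = - P.margin x y := by
  simp only [margin]
  ring

/-- The restriction `P|_Z` of a generalized anonymous profile to a nonempty subset
`Z` of its candidates. -/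
def restrict (P : GAProfile C) (Z : Finset C) (hZ : Z.Nonempty) (hsub : Z ⊆ P.cands) :
    GAProfile C where
  cands := Z
  cands_nonempty := hZ
  count := fun L => ∑ᶠ L' : C → C → Prop, if restrictRel Z L' = L then P.count L' else 0
  count_supp := by
    intro L hL
    by_contra hnot
    apply hL
    apply finsum_eq_zero_of_forall_eq_zero
    intro L'
    split_ifs with h
    · by_contra hc
      exact hnot (h ▸ ((P.count_supp L' hc).restrict hsub))
    · rfl

/-- The profile `P_{a⇄b}` obtained by transposing the candidates `a` and `b`. -/
def swapCands (P : GAProfile C) (a b : C) : GAProfile C where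
  cands := P.cands.image (Equiv.swap a b)
  cands_nonempty := P.cands_nonempty.image _
  count := fun L => P.count (swapRel a b L)
  count_supp := fun L h => (P.count_supp _ h).of_swapRel

end GAProfile

/-- A weak tournament: an asymmetric directed graph on a finite nonempty set of
vertices. -/
structure WeakTournament (C : Type) where
  verts : Finset C
  verts_nonempty : verts.Nonempty
  edge : C → C → Prop
  edge_asymm : ∀ x y, edge x y → ¬ edge y x
  edge_dom : ∀ x y, edge x y → x ∈ verts ∧ y ∈ verts

/-- A weighted weak tournament: a weak tournament together with a positive integer
weight on each edge (normalized to weight `0` off the edges). -/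
structure WeightedWeakTournament (C : Type) where
  verts : Finset C
  verts_nonempty : verts.Nonempty
  edge : C → C → Prop
  edge_asymm : ∀ x y, edge x y → ¬ edge y x
  edge_dom : ∀ x y, edge x y → x ∈ verts ∧ y ∈ verts
  wt : C → C → ℤ
  wt_pos : ∀ x y, edge x y → 0 < wt x y
  wt_eq_zero : ∀ x y, ¬ edge x y → wt x y = 0

namespace GAProfile

variable {C : Type}

/-- The majority graph `M(P)` of a generalized anonymous profile. -/
def maj (P : GAProfile C) : WeakTournament C where
  verts := P.cands
  verts_nonempty := P.cands_nonempty
  edge := fun x y => 0 < P.margin x y ∧ x ∈ P.cands ∧ y ∈ P.cands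
  edge_asymm := by
    intro x y h h'
    have hneg := P.margin_neg x y
    have h1 := h.1
    have h2 := h'.1
    omega
  edge_dom := fun x y h => ⟨h.2.1, h.2.2⟩

/-- The margin graph `ℳ(P)` of a generalized anonymous profile. -/
def marg (P : GAProfile C) : WeightedWeakTournament C where
  verts := P.cands
  verts_nonempty := P.cands_nonempty
  edge := fun x y => 0 < P.margin x y ∧ x ∈ P.cands ∧ y ∈ P.cands
  edge_asymm := by
    intro x y h h'
    have hneg := P.margin_neg x y
    have h1 := h.1
    have h2 := h'.1
    omega
  edge_dom := fun x y h => ⟨h.2.1, h.2.2⟩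
  wt := fun x y =>
    if 0 < P.margin x y ∧ x ∈ P.cands ∧ y ∈ P.cands then P.margin x y else 0
  wt_pos := by
    intro x y h
    show 0 < if 0 < P.margin x y ∧ x ∈ P.cands ∧ y ∈ P.cands then P.margin x y else 0
    rw [if_pos h]
    exact h.1
  wt_eq_zero := by
    intro x y h
    show (if 0 < P.margin x y ∧ x ∈ P.cands ∧ y ∈ P.cands then P.margin x y else 0) = 0
    exact if_neg h

end GAProfile

/-- The number `ψ_Y = 2 (|Y| − 2)!`. -/
def psi {C : Type} (Y : Finset C) : ℤ := 2 * ((Y.card - 2).factorial : ℤ)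

theorem psi_pos {C : Type} (Y : Finset C) : 0 < psi Y := by
  have h := Nat.factorial_pos (Y.card - 2)
  simp only [psi]
  omega

/-- The count function of the profile `𝐋_Y` consisting of one copy of each linear
order of `Y`. -/
def allOrdersCount {C : Type} (Y : Finset C) (L : C → C → Prop) : ℤ :=
  if IsStrictLinearOrderOn Y L then 1 else 0

/-- `L` ranks `a` first and `b` second among the candidates in `Y`. -/
def firstSecond {C : Type} (Y : Finset C) (a b : C) (L : C → C → Prop) : Prop :=
  (∀ z ∈ Y, z ≠ a → L a z) ∧ ∀ z ∈ Y, z ≠ a → z ≠ b → L b z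

/-- The count function of the `ab`-`Y`-block `𝐋_{ab-Y}`: one copy of each linear
order of `Y` with `a` first and `b` second. -/
def blockCount {C : Type} (Y : Finset C) (a b : C) (L : C → C → Prop) : ℤ :=
  if IsStrictLinearOrderOn Y L ∧ firstSecond Y a b L then 1 else 0

/-- The count function of the profile
`𝔏_Y(T) = 𝐋_Y + Σ_{a→b in T} (𝐋_{ab-Y} − 𝐋_{ba-Y})`. -/
def bigLCount {C : Type} (Y : Finset C) (T : WeakTournament C) : (C → C → Prop) → ℤ :=
  fun L => allOrdersCount Y L +
    ∑ p ∈ T.verts ×ˢ T.verts,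
      (if T.edge p.1 p.2 then blockCount Y p.1 p.2 L - blockCount Y p.2 p.1 L else 0)

/-- The profile `𝔏_Y(T)`. -/
def bigL {C : Type} (Y : Finset C) (T : WeakTournament C) (hsub : T.verts ⊆ Y) :
    GAProfile C where
  cands := Y
  cands_nonempty := by
    obtain ⟨x, hx⟩ := T.verts_nonempty
    exact ⟨x, hsub hx⟩
  count := bigLCount Y T
  count_supp := by
    intro L hL
    by_contra h
    apply hL
    have hb : ∀ a b : C, blockCount Y a b L = 0 := by
      intro a b
      exact if_neg (by exact fun hc => h hc.1)
    simp only [bigLCount, allOrdersCount, if_neg h, zero_add]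
    refine Finset.sum_eq_zero fun p _ => ?_
    rw [hb, hb, sub_self]
    split <;> rfl

/-- The profile representation `𝔓_Y(T) = 𝔏_Y(T)|_{X(T)}` of a weak tournament `T`
relative to `Y`. -/
def profileRep {C : Type} (Y : Finset C) (T : WeakTournament C) (hsub : T.verts ⊆ Y) :
    GAProfile C :=
  (bigL Y T hsub).restrict T.verts T.verts_nonempty hsub

/-- The count function of the profile
`𝔏_{Y,m}(𝒯) = m𝐋_Y + Σ_{a→b in 𝒯 with weight kψ_Y} (k𝐋_{ab-Y} − k𝐋_{ba-Y})`. -/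
def bigLWCount {C : Type} (Y : Finset C) (m : ℕ) (T : WeightedWeakTournament C) :
    (C → C → Prop) → ℤ :=
  fun L => (m : ℤ) * allOrdersCount Y L +
    ∑ p ∈ T.verts ×ˢ T.verts,
      (if T.edge p.1 p.2 then
        (T.wt p.1 p.2 / psi Y) * (blockCount Y p.1 p.2 L - blockCount Y p.2 p.1 L)
      else 0)

/-- The profile `𝔏_{Y,m}(𝒯)`. -/
def bigLW {C : Type} (Y : Finset C) (m : ℕ) (T : WeightedWeakTournament C)
    (hsub : T.verts ⊆ Y) : GAProfile C where
  cands := Y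
  cands_nonempty := by
    obtain ⟨x, hx⟩ := T.verts_nonempty
    exact ⟨x, hsub hx⟩
  count := bigLWCount Y m T
  count_supp := by
    intro L hL
    by_contra h
    apply hL
    have hb : ∀ a b : C, blockCount Y a b L = 0 := by
      intro a b
      exact if_neg (by exact fun hc => h hc.1)
    simp only [bigLWCount, allOrdersCount, if_neg h, mul_zero, zero_add]
    refine Finset.sum_eq_zero fun p _ => ?_
    rw [hb, hb, sub_self, mul_zero]
    split <;> rfl

/-- The profile representation `𝔓_{Y,m}(𝒯) = 𝔏_{Y,m}(𝒯)|_{X(𝒯)}` of a weighted weak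
tournament `𝒯` relative to `Y` and `m`. -/
def profileRepW {C : Type} (Y : Finset C) (m : ℕ) (T : WeightedWeakTournament C)
    (hsub : T.verts ⊆ Y) : GAProfile C :=
  (bigLW Y m T hsub).restrict T.verts T.verts_nonempty hsub

/-- Membership in `𝕎𝕋^w_{Y,m}`: a weighted weak tournament on vertices included in
`Y`, each of whose weights is `kψ_Y` for some positive `k ≤ m`. -/
def MemWTw {C : Type} (Y : Finset C) (m : ℕ) (T : WeightedWeakTournament C) : Prop :=
  T.verts ⊆ Y ∧
    ∀ a b, T.edge a b → ∃ k : ℕ, 0 < k ∧ k ≤ m ∧ T.wt a b = (k : ℤ) * psi Y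

/-! ### Auxiliary development -/

namespace MargAux

variable {C : Type}

theorem slo_asymm {s : Finset C} {L : C → C → Prop} (h : IsStrictLinearOrderOn s L)
    {x y : C} (hxy : L x y) : ¬ L y x :=
  fun hyx => h.1 x (h.2.1 x y x hxy hyx)

/-- The set of strict linear orders on `Y`. -/
def OrdersOn (Y : Finset C) : Set (C → C → Prop) := {L | IsStrictLinearOrderOn Y L}

theorem ordersOn_finite (Y : Finset C) : (OrdersOn Y).Finite := by
  have hinj : Set.InjOn (fun L : C → C → Prop => (Y ×ˢ Y).filter (fun p => L p.1 p.2))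
      (OrdersOn Y) := by
    intro L hL M hM h
    funext x y
    have hiff : ∀ N : C → C → Prop, IsStrictLinearOrderOn Y N →
        (N x y ↔ (x, y) ∈ (Y ×ˢ Y).filter (fun p => N p.1 p.2)) := by
      intro N hN
      constructor
      · intro hxy
        obtain ⟨h1, h2⟩ := hN.2.2.2 x y hxy
        simp [Finset.mem_filter, Finset.mem_product, h1, h2, hxy]
      · intro hmem
        simpa using (Finset.mem_filter.mp hmem).2
    apply propext
    rw [hiff L hL, hiff M hM, show Finset.filter (fun p => L p.1 p.2) (Y ×ˢ Y)
      = Finset.filter (fun p => M p.1 p.2) (Y ×ˢ Y) from h]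
  have himg : ((fun L : C → C → Prop => (Y ×ˢ Y).filter (fun p => L p.1 p.2)) '' OrdersOn Y).Finite := by
    apply Set.Finite.subset (Set.finite_range (fun s : (Y ×ˢ Y).powerset => (s : Finset (C × C))))
    rintro _ ⟨L, _, rfl⟩
    exact ⟨⟨_, Finset.mem_powerset.mpr (Finset.filter_subset _ _)⟩, rfl⟩
  exact Set.Finite.of_finite_image himg hinj

/-- The finset of strict linear orders on `Y`. -/
noncomputable def ordersFinset (Y : Finset C) : Finset (C → C → Prop) :=
  (ordersOn_finite Y).toFinset

theorem mem_ordersFinset {Y : Finset C} {L : C → C → Prop} :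
    L ∈ ordersFinset Y ↔ IsStrictLinearOrderOn Y L := by
  simp [ordersFinset, OrdersOn]

/-- Every strict linear order on a nonempty finite set has a top element. -/
theorem exists_top (s : Finset C) : ∀ L : C → C → Prop, s.Nonempty →
    IsStrictLinearOrderOn s L → ∃ a ∈ s, ∀ z ∈ s, z ≠ a → L a z := by
  classical
  induction s using Finset.strongInduction with
  | _ s ih =>
    intro L hs hL
    obtain ⟨x, hx⟩ := hs
    rcases Finset.eq_empty_or_nonempty (s.erase x) with hsx | hsx
    · refine ⟨x, hx, fun z hz hzx => ?_⟩
      exact absurd (Finset.mem_erase.mpr ⟨hzx, hz⟩) (by simp [hsx])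
    · obtain ⟨b, hb, htop⟩ := ih (s.erase x) (Finset.erase_ssubset hx) _
        hsx (hL.restrict (Finset.erase_subset _ _))
      have hbx : b ≠ x := (Finset.mem_erase.mp hb).1
      have hbs : b ∈ s := (Finset.mem_erase.mp hb).2
      by_cases hxb : L x b
      · refine ⟨x, hx, fun z hz hzx => ?_⟩
        rcases eq_or_ne z b with rfl | hzb
        · exact hxb
        · exact hL.2.1 _ _ _ hxb (htop z (Finset.mem_erase.mpr ⟨hzx, hz⟩) hzb).1
      · refine ⟨b, hbs, fun z hz hzb => ?_⟩
        rcases eq_or_ne z x with rfl | hzx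
        · rcases hL.2.2.1 z hz b hbs hzb with h | h
          · exact absurd h hxb
          · exact h
        · exact (htop z (Finset.mem_erase.mpr ⟨hzx, hz⟩) hzb).1

/-- Extend an order on `t` by putting `a` on top. -/
def extRel (t : Finset C) (a : C) (L' : C → C → Prop) : C → C → Prop :=
  fun x y => L' x y ∨ (x = a ∧ y ∈ t)

theorem extRel_slo {t : Finset C} {a : C} (ha : a ∉ t) {L' : C → C → Prop}
    (h : IsStrictLinearOrderOn t L') :
    IsStrictLinearOrderOn (insert a t) (extRel t a L') := by
  obtain ⟨hirr, htr, htot, hdom⟩ := h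
  refine ⟨?_, ?_, ?_, ?_⟩
  · rintro x (hx | ⟨rfl, hx⟩)
    · exact hirr x hx
    · exact ha hx
  · rintro x y z (hxy | ⟨rfl, hy⟩) (hyz | ⟨rfl, hz⟩)
    · exact Or.inl (htr _ _ _ hxy hyz)
    · exact absurd (hdom _ _ hxy).2 (by rintro h; exact ha h)
    · exact Or.inr ⟨rfl, (hdom _ _ hyz).2⟩
    · exact absurd hy ha
  · intro x hx y hy hne
    rcases Finset.mem_insert.mp hx with rfl | hx'
    · rcases Finset.mem_insert.mp hy with rfl | hy'
      · exact absurd rfl hne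
      · exact Or.inl (Or.inr ⟨rfl, hy'⟩)
    · rcases Finset.mem_insert.mp hy with rfl | hy'
      · exact Or.inr (Or.inr ⟨rfl, hx'⟩)
      · rcases htot x hx' y hy' hne with h | h
        · exact Or.inl (Or.inl h)
        · exact Or.inr (Or.inl h)
  · rintro x y (hxy | ⟨rfl, hy⟩)
    · exact ⟨Finset.mem_insert_of_mem (hdom _ _ hxy).1,
        Finset.mem_insert_of_mem (hdom _ _ hxy).2⟩
    · exact ⟨Finset.mem_insert_self _ _, Finset.mem_insert_of_mem hy⟩

theorem restrict_extRel {t : Finset C} {a : C} (ha : a ∉ t) {L' : C → C → Prop}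
    (h : IsStrictLinearOrderOn t L') : restrictRel t (extRel t a L') = L' := by
  funext x y
  apply propext
  constructor
  · rintro ⟨hxy | ⟨rfl, hy⟩, hx, hy'⟩
    · exact hxy
    · exact absurd hx ha
  · intro hxy
    exact ⟨Or.inl hxy, (h.2.2.2 _ _ hxy).1, (h.2.2.2 _ _ hxy).2⟩

theorem extRel_restrict {t : Finset C} {a : C} (ha : a ∉ t) {L : C → C → Prop}
    (h : IsStrictLinearOrderOn (insert a t) L) (htop : ∀ z ∈ t, L a z) :
    extRel t a (restrictRel t L) = L := by
  funext x y
  apply propext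
  constructor
  · rintro (⟨hxy, _, _⟩ | ⟨rfl, hy⟩)
    · exact hxy
    · exact htop y hy
  · intro hxy
    obtain ⟨hx, hy⟩ := h.2.2.2 _ _ hxy
    rcases Finset.mem_insert.mp hx with rfl | hx'
    · rcases Finset.mem_insert.mp hy with rfl | hy'
      · exact absurd hxy (h.1 _)
      · exact Or.inr ⟨rfl, hy'⟩
    · rcases Finset.mem_insert.mp hy with rfl | hy'
      · exact absurd hxy (slo_asymm h (htop x hx'))
      · exact Or.inl ⟨hxy, hx', hy'⟩

theorem card_top_orders {s : Finset C} {a : C} (ha : a ∈ s) :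
    ((ordersFinset s).filter (fun L => ∀ z ∈ s, z ≠ a → L a z)).card
      = (ordersFinset (s.erase a)).card := by
  have hanotin : a ∉ s.erase a := Finset.notMem_erase a s
  apply Finset.card_nbij' (i := fun L => restrictRel (s.erase a) L)
    (j := fun L' => extRel (s.erase a) a L')
  · intro L hL
    obtain ⟨hord, htop⟩ := Finset.mem_filter.mp hL
    rw [mem_ordersFinset] at hord
    rw [Finset.mem_coe, mem_ordersFinset]
    exact hord.restrict (Finset.erase_subset _ _)
  · intro L' hL'
    rw [Finset.mem_coe, mem_ordersFinset] at hL'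
    refine Finset.mem_filter.mpr ⟨?_, ?_⟩
    · rw [mem_ordersFinset]
      have := extRel_slo hanotin hL'
      rwa [Finset.insert_erase ha] at this
    · intro z hz hza
      exact Or.inr ⟨rfl, Finset.mem_erase.mpr ⟨hza, hz⟩⟩
  · intro L hL
    obtain ⟨hord, htop⟩ := Finset.mem_filter.mp hL
    rw [mem_ordersFinset] at hord
    apply extRel_restrict hanotin
    · rwa [Finset.insert_erase ha]
    · intro z hz
      exact htop z (Finset.mem_erase.mp hz).2 (Finset.mem_erase.mp hz).1
  · intro L' hL'
    rw [Finset.mem_coe, mem_ordersFinset] at hL'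
    exact restrict_extRel hanotin hL'

theorem card_ordersFinset (s : Finset C) : (ordersFinset s).card = s.card.factorial := by
  classical
  induction s using Finset.strongInduction with
  | _ s ih =>
    rcases Finset.eq_empty_or_nonempty s with rfl | hs
    · have : ordersFinset (∅ : Finset C) = {fun _ _ => False} := by
        ext L
        rw [mem_ordersFinset, Finset.mem_singleton]
        constructor
        · intro h
          funext x y
          apply propext
          simp only [iff_false]
          intro hxy
          simpa using (h.2.2.2 x y hxy).1
        · rintro rfl
          exact ⟨fun _ => id, fun _ _ _ h => h.elim, fun x hx => by simp at hx,
            fun _ _ h => h.elim⟩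
      simp [this]
    · have hcov : ordersFinset s =
          s.biUnion (fun a => (ordersFinset s).filter (fun L => ∀ z ∈ s, z ≠ a → L a z)) := by
        ext L
        simp only [Finset.mem_biUnion, Finset.mem_filter]
        constructor
        · intro hL
          obtain ⟨a, ha, htop⟩ := exists_top s L hs (mem_ordersFinset.mp hL)
          exact ⟨a, ha, hL, htop⟩
        · rintro ⟨a, _, hL, _⟩
          exact hL
      have hdisj : ∀ a ∈ s, ∀ b ∈ s, a ≠ b →
          Disjoint ((ordersFinset s).filter (fun L => ∀ z ∈ s, z ≠ a → L a z))
            ((ordersFinset s).filter (fun L => ∀ z ∈ s, z ≠ b → L b z)) := by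
        intro a ha b hb hab
        rw [Finset.disjoint_left]
        intro L hLa hLb
        obtain ⟨hord, htopa⟩ := Finset.mem_filter.mp hLa
        obtain ⟨_, htopb⟩ := Finset.mem_filter.mp hLb
        exact slo_asymm (mem_ordersFinset.mp hord) (htopa b hb (Ne.symm hab))
          (htopb a ha hab)
      rw [hcov, Finset.card_biUnion hdisj]
      have hterm : ∀ a ∈ s,
          ((ordersFinset s).filter (fun L => ∀ z ∈ s, z ≠ a → L a z)).card
            = (s.card - 1).factorial := by
        intro a ha
        rw [card_top_orders ha, ih (s.erase a) (Finset.erase_ssubset ha),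
          Finset.card_erase_of_mem ha]
      rw [Finset.sum_congr rfl hterm, Finset.sum_const, smul_eq_mul]
      obtain ⟨n, hn⟩ : ∃ n, s.card = n + 1 :=
        ⟨s.card - 1, (Nat.succ_pred_eq_of_pos (Finset.card_pos.mpr hs)).symm⟩
      rw [hn]
      simp [Nat.factorial_succ]

/-- The finset of strict linear orders on `Y` placing `a` first and `b` second. -/
noncomputable def blockFinset (Y : Finset C) (a b : C) : Finset (C → C → Prop) :=
  (ordersFinset Y).filter (fun L => firstSecond Y a b L)

theorem card_blockFinset {Y : Finset C} {a b : C} (ha : a ∈ Y) (hb : b ∈ Y)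
    (hab : a ≠ b) : (blockFinset Y a b).card = (Y.card - 2).factorial := by
  have hanotin : a ∉ Y.erase a := Finset.notMem_erase a Y
  have hbmem : b ∈ Y.erase a := Finset.mem_erase.mpr ⟨Ne.symm hab, hb⟩
  have step1 : (blockFinset Y a b).card =
      ((ordersFinset (Y.erase a)).filter (fun L => ∀ z ∈ Y.erase a, z ≠ b → L b z)).card := by
    apply Finset.card_nbij' (i := fun L => restrictRel (Y.erase a) L)
      (j := fun L' => extRel (Y.erase a) a L')
    · intro L hL
      obtain ⟨hord, hfs⟩ := Finset.mem_filter.mp hL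
      rw [mem_ordersFinset] at hord
      refine Finset.mem_filter.mpr ⟨mem_ordersFinset.mpr
        (hord.restrict (Finset.erase_subset _ _)), ?_⟩
      intro z hz hzb
      obtain ⟨hza, hzY⟩ := Finset.mem_erase.mp hz
      exact ⟨hfs.2 z hzY hza hzb, hbmem, hz⟩
    · intro L' hL'
      obtain ⟨hord, htop⟩ := Finset.mem_filter.mp hL'
      rw [mem_ordersFinset] at hord
      refine Finset.mem_filter.mpr ⟨?_, ?_, ?_⟩
      · rw [mem_ordersFinset]
        have := extRel_slo hanotin hord
        rwa [Finset.insert_erase ha] at this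
      · intro z hz hza
        exact Or.inr ⟨rfl, Finset.mem_erase.mpr ⟨hza, hz⟩⟩
      · intro z hz hza hzb
        exact Or.inl (htop z (Finset.mem_erase.mpr ⟨hza, hz⟩) hzb)
    · intro L hL
      obtain ⟨hord, hfs⟩ := Finset.mem_filter.mp hL
      rw [mem_ordersFinset] at hord
      apply extRel_restrict hanotin
      · rwa [Finset.insert_erase ha]
      · intro z hz
        exact hfs.1 z (Finset.mem_erase.mp hz).2 (Finset.mem_erase.mp hz).1
    · intro L' hL'
      obtain ⟨hord, _⟩ := Finset.mem_filter.mp hL'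
      exact restrict_extRel hanotin (mem_ordersFinset.mp hord)
  have hcc : (Y.erase a).card - 1 = Y.card - 2 := by
    rw [Finset.card_erase_of_mem ha, Nat.sub_sub]
  rw [step1, card_top_orders hbmem, card_ordersFinset,
    Finset.card_erase_of_mem hbmem, hcc]

/-! #### Margins as finite sums -/

/-- The number of ballots in `f` ranking `x` above `y`. -/
noncomputable def cnt (Y : Finset C) (f : (C → C → Prop) → ℤ) (x y : C) : ℤ :=
  ∑ L ∈ ordersFinset Y, if L x y then f L else 0

theorem margin_eq (P : GAProfile C) (x y : C) :
    P.margin x y = cnt P.cands P.count x y - cnt P.cands P.count y x := by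
  unfold GAProfile.margin cnt
  congr 1 <;>
  · apply finsum_eq_sum_of_support_subset
    intro L hL
    simp only [Function.mem_support] at hL
    have hc : P.count L ≠ 0 := by
      intro h
      apply hL
      simp [h]
    simp only [Finset.coe_sort_coe, Set.Finite.coe_toFinset, ordersFinset]
    exact P.count_supp L hc

theorem margin_self (P : GAProfile C) (x : C) : P.margin x x = 0 := sub_self _

theorem margin_restrict (P : GAProfile C) {Z : Finset C} (hZ : Z.Nonempty)
    (hsub : Z ⊆ P.cands) {x y : C} (hx : x ∈ Z) (hy : y ∈ Z) :
    (P.restrict Z hZ hsub).margin x y = P.margin x y := by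
  rw [margin_eq, margin_eq]
  have key : ∀ u v : C, u ∈ Z → v ∈ Z →
      cnt Z (P.restrict Z hZ hsub).count u v = cnt P.cands P.count u v := by
    intro u v hu hv
    have hcount : ∀ L, (P.restrict Z hZ hsub).count L
        = ∑ L' ∈ ordersFinset P.cands, if restrictRel Z L' = L then P.count L' else 0 := by
      intro L
      show (∑ᶠ L' : C → C → Prop, if restrictRel Z L' = L then P.count L' else 0) = _
      apply finsum_eq_sum_of_support_subset
      intro L' hL'
      simp only [Function.mem_support] at hL'
      have hc : P.count L' ≠ 0 := by
        intro h
        apply hL'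
        simp [h]
      simp only [Finset.coe_sort_coe, Set.Finite.coe_toFinset, ordersFinset]
      exact P.count_supp L' hc
    unfold cnt
    calc ∑ L ∈ ordersFinset Z, (if L u v then (P.restrict Z hZ hsub).count L else 0)
        = ∑ L ∈ ordersFinset Z, ∑ L' ∈ ordersFinset P.cands,
            (if restrictRel Z L' = L then (if L u v then P.count L' else 0) else 0) := by
          refine Finset.sum_congr rfl fun L _ => ?_
          rw [hcount]
          split_ifs with h
          · exact Finset.sum_congr rfl fun L' _ => by split_ifs <;> simp [h]
          · exact (Finset.sum_eq_zero fun L' _ => by simp [h]).symm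
      _ = ∑ L' ∈ ordersFinset P.cands, ∑ L ∈ ordersFinset Z,
            (if restrictRel Z L' = L then (if L u v then P.count L' else 0) else 0) :=
          Finset.sum_comm
      _ = ∑ L' ∈ ordersFinset P.cands, (if L' u v then P.count L' else 0) := by
          refine Finset.sum_congr rfl fun L' hL' => ?_
          rw [Finset.sum_ite_eq]
          have hord : IsStrictLinearOrderOn P.cands L' := mem_ordersFinset.mp hL'
          have hmem : restrictRel Z L' ∈ ordersFinset Z :=
            mem_ordersFinset.mpr (hord.restrict hsub)
          rw [if_pos hmem]
          have : restrictRel Z L' u v ↔ L' u v :=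
            ⟨fun h => h.1, fun h => ⟨h, hu, hv⟩⟩
          split_ifs with h1 h2 h2
          · rfl
          · exact absurd (this.mp h1) h2
          · exact absurd (this.mpr h2) h1
          · rfl
  show cnt Z (P.restrict Z hZ hsub).count x y - cnt Z (P.restrict Z hZ hsub).count y x = _
  rw [key x y hx hy, key y x hy hx]

theorem cnt_add (Y : Finset C) (f g : (C → C → Prop) → ℤ) (x y : C) :
    cnt Y (fun L => f L + g L) x y = cnt Y f x y + cnt Y g x y := by
  unfold cnt
  rw [← Finset.sum_add_distrib]
  exact Finset.sum_congr rfl fun L _ => by split_ifs <;> simp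

theorem cnt_mul (Y : Finset C) (c : ℤ) (f : (C → C → Prop) → ℤ) (x y : C) :
    cnt Y (fun L => c * f L) x y = c * cnt Y f x y := by
  unfold cnt
  rw [Finset.mul_sum]
  exact Finset.sum_congr rfl fun L _ => by split_ifs <;> simp

theorem cnt_sub (Y : Finset C) (f g : (C → C → Prop) → ℤ) (x y : C) :
    cnt Y (fun L => f L - g L) x y = cnt Y f x y - cnt Y g x y := by
  unfold cnt
  rw [← Finset.sum_sub_distrib]
  exact Finset.sum_congr rfl fun L _ => by split_ifs <;> simp

theorem cnt_sum (Y : Finset C) {ι : Type} (s : Finset ι) (g : ι → (C → C → Prop) → ℤ)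
    (x y : C) : cnt Y (fun L => ∑ i ∈ s, g i L) x y = ∑ i ∈ s, cnt Y (g i) x y := by
  unfold cnt
  rw [Finset.sum_comm]
  refine Finset.sum_congr rfl fun L _ => ?_
  split_ifs with h
  · rfl
  · exact (Finset.sum_eq_zero fun i _ => rfl).symm

theorem cnt_ite (Y : Finset C) (c : Prop) (f : (C → C → Prop) → ℤ) (x y : C) :
    cnt Y (fun L => if c then f L else 0) x y = if c then cnt Y f x y else 0 := by
  by_cases h : c
  · simp only [h, if_true]
  · simp only [h, if_false]
    unfold cnt
    exact Finset.sum_eq_zero fun L _ => by split_ifs <;> rfl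

/-! #### Swap invariance -/

theorem swap_mem {Y : Finset C} {x y : C} (hx : x ∈ Y) (hy : y ∈ Y) {z : C}
    (hz : z ∈ Y) : Equiv.swap x y z ∈ Y := by
  rw [Equiv.swap_apply_def]
  split_ifs <;> assumption

theorem image_swap_self {Y : Finset C} {x y : C} (hx : x ∈ Y) (hy : y ∈ Y) :
    Y.image (Equiv.swap x y) = Y := by
  ext z
  simp only [Finset.mem_image]
  constructor
  · rintro ⟨w, hw, rfl⟩
    exact swap_mem hx hy hw
  · intro hz
    exact ⟨Equiv.swap x y z, swap_mem hx hy hz, Equiv.swap_apply_self _ _ _⟩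

theorem mem_orders_swap {Y : Finset C} {x y : C} (hx : x ∈ Y) (hy : y ∈ Y)
    {L : C → C → Prop} (h : L ∈ ordersFinset Y) : swapRel x y L ∈ ordersFinset Y := by
  rw [mem_ordersFinset] at h ⊢
  have := h.swapRel_mem x y
  rwa [image_swap_self hx hy] at this

theorem swapRel_invol {x y : C} (L : C → C → Prop) :
    swapRel x y (swapRel x y L) = L := by
  funext u v
  simp [swapRel, Equiv.swap_apply_self]

theorem cnt_swap {Y : Finset C} {x y : C} (hx : x ∈ Y) (hy : y ∈ Y)
    (f : (C → C → Prop) → ℤ)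
    (hf : ∀ L ∈ ordersFinset Y, f (swapRel x y L) = f L) :
    cnt Y f x y = cnt Y f y x := by
  unfold cnt
  apply Finset.sum_nbij' (i := fun L => swapRel x y L) (j := fun L => swapRel x y L)
  · intro L hL
    exact mem_orders_swap hx hy hL
  · intro L hL
    exact mem_orders_swap hx hy hL
  · intro L _
    exact swapRel_invol L
  · intro L _
    exact swapRel_invol L
  · intro L hL
    have h1 : swapRel x y L y x = L x y := by simp [swapRel]
    rw [h1, hf L hL]

/-! #### Values of `cnt` on blocks -/

theorem cnt_allOrders_symm {Y : Finset C} {x y : C} (hx : x ∈ Y) (hy : y ∈ Y) :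
    cnt Y (allOrdersCount Y) x y = cnt Y (allOrdersCount Y) y x := by
  apply cnt_swap hx hy
  intro L hL
  unfold allOrdersCount
  rw [if_pos (mem_ordersFinset.mp (mem_orders_swap hx hy hL)),
    if_pos (mem_ordersFinset.mp hL)]

theorem cnt_block_first {Y : Finset C} {a b y : C} (hyY : y ∈ Y) (hya : y ≠ a) :
    cnt Y (blockCount Y a b) a y = ((blockFinset Y a b).card : ℤ) := by
  unfold cnt blockCount blockFinset
  rw [Finset.card_filter, Nat.cast_sum]
  refine Finset.sum_congr rfl fun L hL => ?_
  have hord := mem_ordersFinset.mp hL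
  by_cases hfs : firstSecond Y a b L
  · rw [if_pos (hfs.1 y hyY hya), if_pos ⟨hord, hfs⟩, if_pos hfs]
    rfl
  · simp [hfs]

theorem cnt_block_first_rev {Y : Finset C} {a b y : C} (hyY : y ∈ Y) (hya : y ≠ a) :
    cnt Y (blockCount Y a b) y a = 0 := by
  unfold cnt blockCount
  refine Finset.sum_eq_zero fun L hL => ?_
  have hord := mem_ordersFinset.mp hL
  split_ifs with h1 h2
  · exact absurd h1 (slo_asymm hord (h2.2.1 y hyY hya))
  · rfl
  · rfl

theorem cnt_block_second {Y : Finset C} {a b y : C} (hyY : y ∈ Y) (hya : y ≠ a)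
    (hyb : y ≠ b) : cnt Y (blockCount Y a b) b y = ((blockFinset Y a b).card : ℤ) := by
  unfold cnt blockCount blockFinset
  rw [Finset.card_filter, Nat.cast_sum]
  refine Finset.sum_congr rfl fun L hL => ?_
  have hord := mem_ordersFinset.mp hL
  by_cases hfs : firstSecond Y a b L
  · rw [if_pos (hfs.2 y hyY hya hyb), if_pos ⟨hord, hfs⟩, if_pos hfs]
    rfl
  · simp [hfs]

theorem cnt_block_second_rev {Y : Finset C} {a b y : C} (hyY : y ∈ Y) (hya : y ≠ a)
    (hyb : y ≠ b) : cnt Y (blockCount Y a b) y b = 0 := by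
  unfold cnt blockCount
  refine Finset.sum_eq_zero fun L hL => ?_
  have hord := mem_ordersFinset.mp hL
  split_ifs with h1 h2
  · exact absurd h1 (slo_asymm hord (h2.2.2 y hyY hya hyb))
  · rfl
  · rfl

theorem firstSecond_swap {Y : Finset C} {a b x y : C} (hx : x ∈ Y) (hy : y ∈ Y)
    (hax : a ≠ x) (hay : a ≠ y) (hbx : b ≠ x) (hby : b ≠ y) (L : C → C → Prop) :
    firstSecond Y a b (swapRel x y L) ↔ firstSecond Y a b L := by
  have hsa : Equiv.swap x y a = a := Equiv.swap_apply_of_ne_of_ne hax hay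
  have hsb : Equiv.swap x y b = b := Equiv.swap_apply_of_ne_of_ne hbx hby
  have hne : ∀ {c z : C}, Equiv.swap x y c = c → z ≠ c → Equiv.swap x y z ≠ c := by
    intro c z hc hz h
    apply hz
    have := congrArg (Equiv.swap x y) h
    rwa [Equiv.swap_apply_self, hc] at this
  constructor
  · rintro ⟨h1, h2⟩
    constructor
    · intro z hz hza
      have := h1 (Equiv.swap x y z) (swap_mem hx hy hz) (hne hsa hza)
      unfold swapRel at this
      rwa [hsa, Equiv.swap_apply_self] at this
    · intro z hz hza hzb
      have := h2 (Equiv.swap x y z) (swap_mem hx hy hz) (hne hsa hza) (hne hsb hzb)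
      unfold swapRel at this
      rwa [hsb, Equiv.swap_apply_self] at this
  · rintro ⟨h1, h2⟩
    constructor
    · intro z hz hza
      show L (Equiv.swap x y a) (Equiv.swap x y z)
      rw [hsa]
      exact h1 _ (swap_mem hx hy hz) (hne hsa hza)
    · intro z hz hza hzb
      show L (Equiv.swap x y b) (Equiv.swap x y z)
      rw [hsb]
      exact h2 _ (swap_mem hx hy hz) (hne hsa hza) (hne hsb hzb)

theorem cnt_block_symm {Y : Finset C} {a b x y : C} (hx : x ∈ Y) (hy : y ∈ Y)
    (hax : a ≠ x) (hay : a ≠ y) (hbx : b ≠ x) (hby : b ≠ y) :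
    cnt Y (blockCount Y a b) x y = cnt Y (blockCount Y a b) y x := by
  apply cnt_swap hx hy
  intro L hL
  unfold blockCount
  have h1 : IsStrictLinearOrderOn Y (swapRel x y L) ↔ IsStrictLinearOrderOn Y L :=
    ⟨fun _ => mem_ordersFinset.mp hL,
     fun _ => mem_ordersFinset.mp (mem_orders_swap hx hy hL)⟩
  rw [if_congr (and_congr h1 (firstSecond_swap hx hy hax hay hbx hby L)) rfl rfl]

/-- The key computation : the value of `cnt`-margins of a block. -/
theorem D_eq {Y : Finset C} {a b x y : C} (ha : a ∈ Y) (hb : b ∈ Y) (hab : a ≠ b)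
    (hx : x ∈ Y) (hy : y ∈ Y) (hxy : x ≠ y) :
    cnt Y (blockCount Y a b) x y - cnt Y (blockCount Y a b) y x =
      (if x = a then ((Y.card - 2).factorial : ℤ)
        else if y = a then -((Y.card - 2).factorial : ℤ)
        else if x = b then ((Y.card - 2).factorial : ℤ)
        else if y = b then -((Y.card - 2).factorial : ℤ) else 0) := by
  by_cases hxa : x = a
  · subst hxa
    rw [if_pos rfl, cnt_block_first hy (Ne.symm hxy), cnt_block_first_rev hy (Ne.symm hxy),
      card_blockFinset hx hb hab, sub_zero]
  · rw [if_neg hxa]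
    by_cases hya : y = a
    · subst hya
      rw [if_pos rfl, cnt_block_first_rev hx hxa, cnt_block_first hx hxa,
        card_blockFinset hy hb hab, zero_sub]
    · rw [if_neg hya]
      by_cases hxb : x = b
      · subst hxb
        rw [if_pos rfl, cnt_block_second hy hya (Ne.symm hxy),
          cnt_block_second_rev hy hya (Ne.symm hxy), card_blockFinset ha hx hab, sub_zero]
      · rw [if_neg hxb]
        by_cases hyb : y = b
        · subst hyb
          rw [if_pos rfl, cnt_block_second_rev hx hxa hxb, cnt_block_second hx hxa hxb,
            card_blockFinset ha hy hab, zero_sub]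
        · rw [if_neg hyb, cnt_block_symm hx hy (fun h => hxa h.symm) (fun h => hya h.symm)
            (fun h => hxb h.symm) (fun h => hyb h.symm), sub_self]

theorem E_eq {Y : Finset C} {a b x y : C} (ha : a ∈ Y) (hb : b ∈ Y) (hab : a ≠ b)
    (hx : x ∈ Y) (hy : y ∈ Y) (hxy : x ≠ y) :
    (cnt Y (blockCount Y a b) x y - cnt Y (blockCount Y a b) y x)
      - (cnt Y (blockCount Y b a) x y - cnt Y (blockCount Y b a) y x)
    = if x = a ∧ y = b then psi Y else if x = b ∧ y = a then -psi Y else 0 := by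
  rw [D_eq ha hb hab hx hy hxy, D_eq hb ha (Ne.symm hab) hx hy hxy]
  have hpsi : psi Y = 2 * ((Y.card - 2).factorial : ℤ) := rfl
  by_cases hxa : x = a <;> by_cases hyb : y = b <;> by_cases hxb : x = b <;>
    by_cases hya : y = a <;>
    simp_all <;> ring

theorem psi_ne_zero {C : Type} (Y : Finset C) : psi Y ≠ 0 := ne_of_gt (psi_pos Y)

theorem margin_bigLW {Y : Finset C} {m : ℕ} {T : WeightedWeakTournament C}
    (hsub : T.verts ⊆ Y) (hT : MemWTw Y m T) {x y : C} (hx : x ∈ T.verts)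
    (hy : y ∈ T.verts) (hxy : x ≠ y) :
    (bigLW Y m T hsub).margin x y = T.wt x y - T.wt y x := by
  have hxY := hsub hx
  have hyY := hsub hy
  rw [margin_eq]
  show cnt Y (bigLWCount Y m T) x y - cnt Y (bigLWCount Y m T) y x = _
  have hcnt : ∀ u v : C,
      cnt Y (bigLWCount Y m T) u v = (m : ℤ) * cnt Y (allOrdersCount Y) u v +
        ∑ p ∈ T.verts ×ˢ T.verts, (if T.edge p.1 p.2 then
          (T.wt p.1 p.2 / psi Y) * (cnt Y (blockCount Y p.1 p.2) u v
            - cnt Y (blockCount Y p.2 p.1) u v) else 0) := by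
    intro u v
    unfold bigLWCount
    rw [cnt_add, cnt_mul, cnt_sum]
    congr 1
    refine Finset.sum_congr rfl fun p _ => ?_
    rw [cnt_ite]
    by_cases he : T.edge p.1 p.2
    · rw [if_pos he, if_pos he, cnt_mul, cnt_sub]
    · rw [if_neg he, if_neg he]
  rw [hcnt x y, hcnt y x, cnt_allOrders_symm hxY hyY]
  have hS : (∑ p ∈ T.verts ×ˢ T.verts, (if T.edge p.1 p.2 then
        (T.wt p.1 p.2 / psi Y) * (cnt Y (blockCount Y p.1 p.2) x y
          - cnt Y (blockCount Y p.2 p.1) x y) else 0))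
      - (∑ p ∈ T.verts ×ˢ T.verts, (if T.edge p.1 p.2 then
        (T.wt p.1 p.2 / psi Y) * (cnt Y (blockCount Y p.1 p.2) y x
          - cnt Y (blockCount Y p.2 p.1) y x) else 0))
      = T.wt x y - T.wt y x := by
    rw [← Finset.sum_sub_distrib]
    have hterm : ∀ p ∈ T.verts ×ˢ T.verts,
        ((if T.edge p.1 p.2 then (T.wt p.1 p.2 / psi Y) *
            (cnt Y (blockCount Y p.1 p.2) x y - cnt Y (blockCount Y p.2 p.1) x y) else 0)
          - (if T.edge p.1 p.2 then (T.wt p.1 p.2 / psi Y) *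
            (cnt Y (blockCount Y p.1 p.2) y x - cnt Y (blockCount Y p.2 p.1) y x) else 0))
        = (if T.edge p.1 p.2 then (T.wt p.1 p.2 / psi Y) *
            (if x = p.1 ∧ y = p.2 then psi Y else if x = p.2 ∧ y = p.1 then -psi Y
              else 0) else 0) := by
      intro p hp
      by_cases he : T.edge p.1 p.2
      · rw [if_pos he, if_pos he, if_pos he]
        have hdom := T.edge_dom _ _ he
        have hne : p.1 ≠ p.2 := fun h => T.edge_asymm _ _ he (h ▸ he)
        rw [← E_eq (hsub hdom.1) (hsub hdom.2) hne hxY hyY hxy]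
        ring
      · rw [if_neg he, if_neg he, if_neg he, sub_zero]
    rw [Finset.sum_congr rfl hterm]
    have hpairsub : ({(x, y), (y, x)} : Finset (C × C)) ⊆ T.verts ×ˢ T.verts := by
      intro p hp
      rcases Finset.mem_insert.mp hp with rfl | hp
      · exact Finset.mem_product.mpr ⟨hx, hy⟩
      · rw [Finset.mem_singleton] at hp
        subst hp
        exact Finset.mem_product.mpr ⟨hy, hx⟩
    rw [← Finset.sum_subset hpairsub]
    · have hne : ((x, y) : C × C) ≠ (y, x) := by
        intro h
        exact hxy (congrArg Prod.fst h)
      rw [Finset.sum_pair hne]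
      have h1 : (if T.edge x y then (T.wt x y / psi Y) *
          (if x = x ∧ y = y then psi Y else if x = y ∧ y = x then -psi Y else 0)
          else 0) = T.wt x y := by
        by_cases he : T.edge x y
        · rw [if_pos he, if_pos ⟨rfl, rfl⟩]
          obtain ⟨k, _, _, hk⟩ := hT.2 x y he
          rw [hk, Int.mul_ediv_cancel _ (psi_ne_zero Y)]
        · rw [if_neg he, T.wt_eq_zero x y he]
      have h2 : (if T.edge y x then (T.wt y x / psi Y) *
          (if x = y ∧ y = x then psi Y else if x = x ∧ y = y then -psi Y else 0)
          else 0) = -T.wt y x := by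
        by_cases he : T.edge y x
        · rw [if_pos he, if_neg (fun h : _ ∧ _ => hxy h.1), if_pos ⟨rfl, rfl⟩]
          obtain ⟨k, _, _, hk⟩ := hT.2 y x he
          rw [hk, mul_neg, Int.mul_ediv_cancel _ (psi_ne_zero Y)]
        · rw [if_neg he, T.wt_eq_zero y x he, neg_zero]
      rw [h1, h2]
      ring
    · intro p hp hpnot
      simp only [Finset.mem_insert, Finset.mem_singleton, not_or] at hpnot
      by_cases he : T.edge p.1 p.2
      · rw [if_pos he]
        have hc1 : ¬(x = p.1 ∧ y = p.2) := by
          rintro ⟨rfl, rfl⟩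
          exact hpnot.1 rfl
        have hc2 : ¬(x = p.2 ∧ y = p.1) := by
          rintro ⟨rfl, rfl⟩
          exact hpnot.2 rfl
        rw [if_neg hc1, if_neg hc2, mul_zero]
      · exact if_neg he
  linarith [hS]

/-- Extensionality for weighted weak tournaments. -/
theorem wwt_ext {T₁ T₂ : WeightedWeakTournament C} (hv : T₁.verts = T₂.verts)
    (he : ∀ x y, T₁.edge x y ↔ T₂.edge x y) (hw : ∀ x y, T₁.wt x y = T₂.wt x y) :
    T₁ = T₂ := by
  obtain ⟨v₁, n₁, e₁, a₁, d₁, w₁, p₁, z₁⟩ := T₁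
  obtain ⟨v₂, n₂, e₂, a₂, d₂, w₂, p₂, z₂⟩ := T₂
  simp only at hv he hw
  subst hv
  have he' : e₁ = e₂ := by
    funext u v
    exact propext (he u v)
  have hw' : w₁ = w₂ := by
    funext u v
    exact hw u v
  subst he'
  subst hw'
  rfl

end MargAux

/-- For any finite set `Y` of candidates, any `m ∈ ℤ⁺`, and any
weighted weak tournament `𝒯 ∈ 𝕎𝕋^w_{Y,m}`, the margin graph of the profile
representation of `𝒯` relative to `Y` and `m` equals `𝒯`: `ℳ(𝔓_{Y,m}(𝒯)) = 𝒯`. -/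
theorem marg_profileRepW (C : Type) [Infinite C] (Y : Finset C) (m : ℕ) (hm : 0 < m)
    (T : WeightedWeakTournament C) (hT : MemWTw Y m T) (hsub : T.verts ⊆ Y) :
    (profileRepW Y m T hsub).marg = T := by
  classical
  have hmargin : ∀ x y : C, x ∈ T.verts → y ∈ T.verts → x ≠ y →
      (profileRepW Y m T hsub).margin x y = T.wt x y - T.wt y x := by
    intro x y hx hy hxy
    have h1 : (profileRepW Y m T hsub).margin x y = (bigLW Y m T hsub).margin x y :=
      MargAux.margin_restrict (bigLW Y m T hsub) T.verts_nonempty hsub hx hy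
    rw [h1]
    exact MargAux.margin_bigLW hsub hT hx hy hxy
  have hedge : ∀ x y : C,
      ((0 < (profileRepW Y m T hsub).margin x y ∧
          x ∈ (profileRepW Y m T hsub).cands ∧ y ∈ (profileRepW Y m T hsub).cands)
        ↔ T.edge x y) := by
    intro x y
    constructor
    · rintro ⟨hpos, hx, hy⟩
      have hx' : x ∈ T.verts := hx
      have hy' : y ∈ T.verts := hy
      have hxy : x ≠ y := by
        rintro rfl
        rw [MargAux.margin_self] at hpos
        exact lt_irrefl 0 hpos
      rw [hmargin x y hx' hy' hxy] at hpos
      by_cases he : T.edge x y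
      · exact he
      · exfalso
        rw [T.wt_eq_zero x y he] at hpos
        by_cases he' : T.edge y x
        · have := T.wt_pos y x he'
          linarith
        · rw [T.wt_eq_zero y x he'] at hpos
          linarith
    · intro he
      have hdom := T.edge_dom x y he
      have hxy : x ≠ y := fun h => T.edge_asymm x y he (h ▸ he)
      refine ⟨?_, hdom.1, hdom.2⟩
      rw [hmargin x y hdom.1 hdom.2 hxy, T.wt_eq_zero y x (T.edge_asymm x y he)]
      have := T.wt_pos x y he
      linarith
  apply MargAux.wwt_ext
  · rfl
  · intro x y
    exact hedge x y
  · intro x y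
    show (if 0 < (profileRepW Y m T hsub).margin x y ∧
        x ∈ (profileRepW Y m T hsub).cands ∧ y ∈ (profileRepW Y m T hsub).cands
      then (profileRepW Y m T hsub).margin x y else 0) = T.wt x y
    by_cases hc : 0 < (profileRepW Y m T hsub).margin x y ∧
        x ∈ (profileRepW Y m T hsub).cands ∧ y ∈ (profileRepW Y m T hsub).cands
    · rw [if_pos hc]
      have he := (hedge x y).mp hc
      have hdom := T.edge_dom x y he
      have hxy : x ≠ y := fun h => T.edge_asymm x y he (h ▸ he)
      rw [hmargin x y hdom.1 hdom.2 hxy, T.wt_eq_zero y x (T.edge_asymm x y he),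
        sub_zero]
    · rw [if_neg hc]
      exact (T.wt_eq_zero x y (fun he => hc ((hedge x y).mpr he))).symm
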